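/- Let γ₁, γ₂ be positive semi-definite operators with supp γ₁ ∩ supp γ₂ = {0}, and let (γ₁+γ₂)⁻ denote the inverse of γ₁+γ₂ on its support (Moore–Penrose inverse). Then γ₁(γ₁+γ₂)⁻γ₁ = γ₁ and γ₂(γ₁+γ₂)⁻γ₁ = 0. -/

import Mathlib

open Matrix ComplexOrder

private lemma toEuclideanLin_mul' {n : ℕ} (A B : Matrix (Fin n) (Fin n) ℂ) :
    Matrix.toEuclideanLin (A * B) =
      (Matrix.toEuclideanLin A).comp (Matrix.toEuclideanLin B) := by
  rw [Matrix.toEuclideanLin_eq_toLin, Matrix.toLin_mul _ (PiLp.basisFun 2 ℂ (Fin n)) _]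

private lemma range_mul_le {n : ℕ} (A B : Matrix (Fin n) (Fin n) ℂ) :
    LinearMap.range (Matrix.toEuclideanLin (A * B)) ≤
      LinearMap.range (Matrix.toEuclideanLin A) := by
  rw [toEuclideanLin_mul']
  exact LinearMap.range_comp_le_range _ _

private lemma cancel_of_ker {n : ℕ} {S T M : Matrix (Fin n) (Fin n) ℂ}
    (h : ∀ v, S *ᵥ v = 0 → T *ᵥ v = 0) (hM : S * M = 0) : T * M = 0 := by
  have : Matrix.toLin' (T * M) = Matrix.toLin' (0 : Matrix (Fin n) (Fin n) ℂ) := by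
    refine LinearMap.ext fun v => ?_
    simp only [Matrix.toLin'_apply, Matrix.mulVec_zero, Matrix.zero_mulVec, map_zero]
    rw [← Matrix.mulVec_mulVec]
    apply h
    rw [Matrix.mulVec_mulVec, hM, Matrix.zero_mulVec]
  exact Matrix.toLin'.injective this

/-- For positive semi-definite `γ₁, γ₂` with `supp γ₁ ∩ supp γ₂ = {0}`, the Moore–Penrose
inverse `g` of `γ₁+γ₂` satisfies `γ₁ g γ₁ = γ₁` and `γ₂ g γ₁ = 0`. -/
theorem stmt_15 {n : ℕ} (γ₁ γ₂ g : Matrix (Fin n) (Fin n) ℂ)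
    (hγ₁ : γ₁.PosSemidef) (hγ₂ : γ₂.PosSemidef)
    (hdisj : LinearMap.range (Matrix.toEuclideanLin γ₁)
        ⊓ LinearMap.range (Matrix.toEuclideanLin γ₂) = ⊥)
    (hmp1 : (γ₁ + γ₂) * g * (γ₁ + γ₂) = γ₁ + γ₂) (hmp2 : g * (γ₁ + γ₂) * g = g)
    (hmp3 : ((γ₁ + γ₂) * g)ᴴ = (γ₁ + γ₂) * g) (hmp4 : (g * (γ₁ + γ₂))ᴴ = g * (γ₁ + γ₂)) :
    γ₁ * g * γ₁ = γ₁ ∧ γ₂ * g * γ₁ = 0 := by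
  set S := γ₁ + γ₂ with hS
  -- kernel of S is contained in kernels of γ₁ and γ₂
  have hker : ∀ v, S *ᵥ v = 0 → (γ₁ *ᵥ v = 0 ∧ γ₂ *ᵥ v = 0) := by
    intro v hv
    have h0 : star v ⬝ᵥ γ₁ *ᵥ v + star v ⬝ᵥ γ₂ *ᵥ v = 0 := by
      rw [← dotProduct_add, ← Matrix.add_mulVec, ← hS, hv, dotProduct_zero]
    have h1 := hγ₁.dotProduct_mulVec_nonneg v
    have h2 := hγ₂.dotProduct_mulVec_nonneg v
    have e1 : star v ⬝ᵥ γ₁ *ᵥ v = 0 := ((add_eq_zero_iff_of_nonneg h1 h2).mp h0).1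
    have e2 : star v ⬝ᵥ γ₂ *ᵥ v = 0 := ((add_eq_zero_iff_of_nonneg h1 h2).mp h0).2
    exact ⟨(hγ₁.dotProduct_mulVec_zero_iff v).mp e1, (hγ₂.dotProduct_mulVec_zero_iff v).mp e2⟩
  -- S * (g * S - 1) = 0
  have hSM : S * (g * S - 1) = 0 := by
    rw [Matrix.mul_sub, Matrix.mul_one, ← Matrix.mul_assoc, hmp1, sub_self]
  have h1 : γ₁ * (g * S - 1) = 0 :=
    cancel_of_ker (fun v hv => (hker v hv).1) hSM
  have h2 : γ₂ * (g * S - 1) = 0 :=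
    cancel_of_ker (fun v hv => (hker v hv).2) hSM
  -- so γ₁ * g * S = γ₁ and γ₂ * g * S = γ₂
  have e1 : γ₁ * g * γ₁ + γ₁ * g * γ₂ = γ₁ := by
    have : γ₁ * (g * S) = γ₁ := by
      have := h1
      rw [Matrix.mul_sub, Matrix.mul_one, sub_eq_zero] at this
      exact this
    calc γ₁ * g * γ₁ + γ₁ * g * γ₂ = γ₁ * (g * S) := by
          rw [hS, Matrix.mul_add, Matrix.mul_assoc, Matrix.mul_assoc, ← Matrix.mul_add,
            ← Matrix.mul_add]
      _ = γ₁ := this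
  have e2 : γ₂ * g * γ₁ + γ₂ * g * γ₂ = γ₂ := by
    have : γ₂ * (g * S) = γ₂ := by
      have := h2
      rw [Matrix.mul_sub, Matrix.mul_one, sub_eq_zero] at this
      exact this
    calc γ₂ * g * γ₁ + γ₂ * g * γ₂ = γ₂ * (g * S) := by
          rw [hS, Matrix.mul_add, Matrix.mul_assoc, Matrix.mul_assoc, ← Matrix.mul_add,
            ← Matrix.mul_add]
      _ = γ₂ := this
  -- conjugate transpose versions: γ₁ gᴴ γ₁ + γ₂ gᴴ γ₁ = γ₁, etc.
  have hH1 : γ₁ᴴ = γ₁ := hγ₁.1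
  have hH2 : γ₂ᴴ = γ₂ := hγ₂.1
  have f1 : γ₁ * (gᴴ * γ₁) + γ₂ * (gᴴ * γ₁) = γ₁ := by
    have := congrArg Matrix.conjTranspose e1
    simpa [Matrix.conjTranspose_add, Matrix.conjTranspose_mul, hH1, hH2,
      Matrix.mul_assoc] using this
  have f2 : γ₂ * (gᴴ * γ₂) + γ₁ * (gᴴ * γ₂) = γ₂ := by
    have := congrArg Matrix.conjTranspose e2
    simpa [Matrix.conjTranspose_add, Matrix.conjTranspose_mul, hH1, hH2,
      Matrix.mul_assoc, add_comm] using this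
  -- range argument: a matrix equal to γ₁ * A and γ₂ * B is zero
  have key : ∀ (A B : Matrix (Fin n) (Fin n) ℂ), γ₁ * A = γ₂ * B → γ₂ * B = 0 := by
    intro A B hAB
    have hr : LinearMap.range (Matrix.toEuclideanLin (γ₂ * B)) ≤ ⊥ := by
      rw [← hdisj]
      exact le_inf (by rw [← hAB]; exact range_mul_le _ _) (range_mul_le _ _)
    have : Matrix.toEuclideanLin (γ₂ * B) = 0 :=
      LinearMap.range_eq_bot.mp (le_bot_iff.mp hr)
    exact Matrix.toEuclideanLin.map_eq_zero_iff.mp this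
  -- from f1 : γ₂ * (gᴴ * γ₁) = γ₁ * (1 - gᴴ * γ₁)
  have z1 : γ₂ * (gᴴ * γ₁) = 0 := by
    apply key (1 - gᴴ * γ₁)
    rw [Matrix.mul_sub, Matrix.mul_one, sub_eq_iff_eq_add']
    exact f1.symm
  have z2 : γ₁ * (gᴴ * γ₂) = 0 := by
    have : γ₂ * (1 - gᴴ * γ₂) = γ₁ * (gᴴ * γ₂) := by
      rw [Matrix.mul_sub, Matrix.mul_one, sub_eq_iff_eq_add']
      exact f2.symm
    calc γ₁ * (gᴴ * γ₂) = γ₂ * (1 - gᴴ * γ₂) := this.symm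
      _ = 0 := key _ _ this.symm
  -- transpose back
  have w2 : γ₂ * g * γ₁ = 0 := by
    have := congrArg Matrix.conjTranspose z2
    simpa [Matrix.conjTranspose_mul, hH1, hH2, Matrix.mul_assoc] using this
  have w3 : γ₁ * g * γ₂ = 0 := by
    have := congrArg Matrix.conjTranspose z1
    simpa [Matrix.conjTranspose_mul, hH1, hH2, Matrix.mul_assoc] using this
  refine ⟨?_, w2⟩
  calc γ₁ * g * γ₁ = γ₁ * g * γ₁ + γ₁ * g * γ₂ := by rw [w3, add_zero]
    _ = γ₁ := e1
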